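/- Let E = {(j, i) : j ∈ pa(i), 1 ≤ i ≤ p} ∪ {(i, i) : 1 ≤ i ≤ p}, and define ψ : Θ_𝒟 → ℝ^E by ψ(D, L) = ((L D^{-1} Lᵀ)_{ji})_{(j,i) ∈ E}. Then ψ is continuously differentiable on Θ_𝒟, and at every (D, L) ∈ Θ_𝒟 the absolute value of the determinant of the total derivative of ψ — computed with respect to the free coordinates (D_{ii})_{1≤i≤p} and (L_{ji})_{j∈pa(i)} on the domain, under the bijection matching the coordinate D_{ii} with the loop (i, i) and the coordinate L_{ji} with the edge (j, i) — equals ∏_{j=1}^p D_{jj}^{−(pa_j + 2)}. -/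

import Mathlib

open MeasureTheory Matrix Real Finset

noncomputable section

/-- Index type for the free coordinates of a lower triangular matrix `L ∈ ℒ_𝒟`:
a pair of a vertex `i` and a parent `j ∈ pa i`, standing for the entry `L j i`. -/
abbrev Edges {p : ℕ} (pa : Fin p → Finset (Fin p)) : Type := Σ i : Fin p, {j // j ∈ pa i}

/-- The matrix `L ∈ ℒ_𝒟` built from its free coordinates. -/
def mkL {p : ℕ} (pa : Fin p → Finset (Fin p)) (y : Edges pa → ℝ) :
    Matrix (Fin p) (Fin p) ℝ :=
  Matrix.of fun j i => if j = i then 1 else if h : j ∈ pa i then y ⟨i, j, h⟩ else 0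

/-- `A_{<i>}`, the `pa(i) × pa(i)` submatrix of `A`. -/
def sub2 {p : ℕ} (pa : Fin p → Finset (Fin p)) (A : Matrix (Fin p) (Fin p) ℝ) (i : Fin p) :
    Matrix {j // j ∈ pa i} {j // j ∈ pa i} ℝ :=
  A.submatrix (fun j => j.1) (fun j => j.1)

/-- `A_{<i|}`, the column vector `(A_{ji})_{j ∈ pa(i)}`. -/
def colv {p : ℕ} (pa : Fin p → Finset (Fin p)) (A : Matrix (Fin p) (Fin p) ℝ) (i : Fin p) :
    {j // j ∈ pa i} → ℝ :=
  fun j => A j.1 i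

/-- `A_{[i>}`, the row vector `(A_{ij})_{j ∈ pa(i)}`. -/
def rowv {p : ℕ} (pa : Fin p → Finset (Fin p)) (A : Matrix (Fin p) (Fin p) ℝ) (i : Fin p) :
    {j // j ∈ pa i} → ℝ :=
  fun j => A i j.1

/-- `A_{≤i≥}`, the `fa(i) × fa(i)` submatrix of `A`. -/
def subFam {p : ℕ} (pa : Fin p → Finset (Fin p)) (A : Matrix (Fin p) (Fin p) ℝ) (i : Fin p) :
    Matrix {j // j ∈ insert i (pa i)} {j // j ∈ insert i (pa i)} ℝ :=
  A.submatrix (fun j => j.1) (fun j => j.1)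

/-- `A_{ii|<i>} = A_{ii} - A_{[i>} (A_{<i>})⁻¹ A_{<i|}` (equal to `A_{ii}` when `pa(i) = ∅`). -/
def condVar {p : ℕ} (pa : Fin p → Finset (Fin p)) (A : Matrix (Fin p) (Fin p) ℝ) (i : Fin p) :
    ℝ :=
  A i i - rowv pa A i ⬝ᵥ ((sub2 pa A i)⁻¹ *ᵥ colv pa A i)

/-- The normalizing constant `z_𝒟(U, α)`. -/
def zD {p : ℕ} (pa : Fin p → Finset (Fin p)) (U : Matrix (Fin p) (Fin p) ℝ)
    (α : Fin p → ℝ) : ℝ :=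
  ∏ i : Fin p,
    Real.Gamma (α i / 2 - ((pa i).card : ℝ) / 2 - 1) * (2 : ℝ) ^ (α i / 2 - 1) *
        Real.pi ^ (((pa i).card : ℝ) / 2) *
        (sub2 pa U i).det ^ (α i / 2 - ((pa i).card : ℝ) / 2 - 3 / 2) /
      (subFam pa U i).det ^ (α i / 2 - ((pa i).card : ℝ) / 2 - 1)

/-- The unnormalized DAG-Wishart density on the Cholesky space `Θ_𝒟`. -/
def dagDensity {p : ℕ} (pa : Fin p → Finset (Fin p)) (U : Matrix (Fin p) (Fin p) ℝ)
    (α : Fin p → ℝ) (d : Fin p → ℝ) (L : Matrix (Fin p) (Fin p) ℝ) : ℝ :=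
  Real.exp (-(1 / 2) * ((L * Matrix.diagonal (fun i => (d i)⁻¹) * Lᵀ) * U).trace) *
    ∏ i : Fin p, d i ^ (-(α i) / 2)

/-- The Cholesky space `Θ_𝒟` in free coordinates: diagonal coordinates positive. -/
def thetaSet {p : ℕ} (pa : Fin p → Finset (Fin p)) :
    Set ((Fin p → ℝ) × (Edges pa → ℝ)) :=
  {x | ∀ i, 0 < x.1 i}

/-- The DAG-Wishart distribution `π_{U,α}^{Θ_𝒟}` as a measure on the free coordinates. -/
def dagWishart {p : ℕ} (pa : Fin p → Finset (Fin p)) (U : Matrix (Fin p) (Fin p) ℝ)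
    (α : Fin p → ℝ) : Measure ((Fin p → ℝ) × (Edges pa → ℝ)) :=
  (volume.restrict (thetaSet pa)).withDensity
    (fun x => ENNReal.ofReal ((zD pa U α)⁻¹ * dagDensity pa U α x.1 (mkL pa x.2)))


/-- The map `ψ : Θ_𝒟 → ℝ^E`, `(D, L) ↦ ((L D⁻¹ Lᵀ)_{ji})_{(j,i) ∈ E}`, where the loop
`(i,i)` is indexed by `Sum.inl i` and the edge `(j,i)`, `j ∈ pa i`, by `Sum.inr ⟨i, j⟩`. -/
def psiMap {p : ℕ} (pa : Fin p → Finset (Fin p)) :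
    ((Fin p → ℝ) × (Edges pa → ℝ)) → ((Fin p ⊕ Edges pa) → ℝ) :=
  fun x e =>
    match e with
    | Sum.inl i => (mkL pa x.2 * Matrix.diagonal (fun i => (x.1 i)⁻¹) * (mkL pa x.2)ᵀ) i i
    | Sum.inr ⟨i, j⟩ => (mkL pa x.2 * Matrix.diagonal (fun i => (x.1 i)⁻¹) * (mkL pa x.2)ᵀ) j.1 i

-- ============ auxiliary ============

namespace Stmt8Aux

variable {p : ℕ} (pa : Fin p → Finset (Fin p))

abbrev Dom (pa : Fin p → Finset (Fin p)) := (Fin p → ℝ) × (Edges pa → ℝ)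

def rIdx : Fin p ⊕ Edges pa → Fin p := fun e => match e with
  | .inl i => i
  | .inr g => g.2.1

def cIdx : Fin p ⊕ Edges pa → Fin p := fun e => match e with
  | .inl i => i
  | .inr g => g.1

lemma psiMap_eq (x : Dom pa) (e : Fin p ⊕ Edges pa) :
    psiMap pa x e =
      (mkL pa x.2 * Matrix.diagonal (fun i => (x.1 i)⁻¹) * (mkL pa x.2)ᵀ)
        (rIdx pa e) (cIdx pa e) := by
  rcases e with i | ⟨i, j⟩ <;> rfl

lemma entry_eq (L : Matrix (Fin p) (Fin p) ℝ) (c : Fin p → ℝ) (a b : Fin p) :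
    (L * Matrix.diagonal c * Lᵀ) a b = ∑ k, L a k * c k * L b k := by
  rw [Matrix.mul_apply]
  simp [Matrix.mul_diagonal, Matrix.transpose_apply]

def dl (a k : Fin p) : Dom pa →L[ℝ] ℝ :=
  if a = k then 0
  else if h : a ∈ pa k then
    (ContinuousLinearMap.proj (⟨k, a, h⟩ : Edges pa)).comp
      (ContinuousLinearMap.snd ℝ (Fin p → ℝ) (Edges pa → ℝ))
  else 0

def dInv (k : Fin p) : Dom pa →L[ℝ] ℝ :=
  (ContinuousLinearMap.proj k).comp
    (ContinuousLinearMap.fst ℝ (Fin p → ℝ) (Edges pa → ℝ))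

lemma dl_apply (a k : Fin p) (z : Dom pa) :
    dl pa a k z = if a = k then 0 else if h : a ∈ pa k then z.2 ⟨k, a, h⟩ else 0 := by
  unfold dl
  split_ifs <;> simp

lemma dInv_apply (k : Fin p) (z : Dom pa) : dInv pa k z = z.1 k := rfl

lemma hasFDerivAt_mkL (a k : Fin p) (x : Dom pa) :
    HasFDerivAt (fun y : Dom pa => mkL pa y.2 a k) (dl pa a k) x := by
  unfold mkL dl
  by_cases h1 : a = k
  · simp only [Matrix.of_apply, if_pos h1]
    exact hasFDerivAt_const _ _
  · simp only [Matrix.of_apply, if_neg h1]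
    by_cases h2 : a ∈ pa k
    · simp only [dif_pos h2]
      exact ((ContinuousLinearMap.proj (⟨k, a, h2⟩ : Edges pa)).comp
        (ContinuousLinearMap.snd ℝ (Fin p → ℝ) (Edges pa → ℝ))).hasFDerivAt
    · simp only [dif_neg h2]
      exact hasFDerivAt_const _ _

lemma hasFDerivAt_invk (k : Fin p) (x : Dom pa) (h : x.1 k ≠ 0) :
    HasFDerivAt (fun y : Dom pa => (y.1 k)⁻¹) ((-(x.1 k ^ 2)⁻¹) • dInv pa k) x := by
  have h2 : HasFDerivAt (fun y : Dom pa => y.1 k) (dInv pa k) x :=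
    (dInv pa k).hasFDerivAt
  have := (hasFDerivAt_inv h).comp x h2
  refine this.congr_fderiv ?_
  refine ContinuousLinearMap.ext fun z => ?_
  simp [dInv]
  ring

def dEntry (x : Dom pa) (a b : Fin p) : Dom pa →L[ℝ] ℝ :=
  ∑ k : Fin p,
    (((x.1 k)⁻¹ * mkL pa x.2 b k) • dl pa a k
      + ((x.1 k)⁻¹ * mkL pa x.2 a k) • dl pa b k
      + (-(mkL pa x.2 a k * mkL pa x.2 b k * (x.1 k ^ 2)⁻¹)) • dInv pa k)

lemma hasFDerivAt_entry (x : Dom pa) (hx : ∀ i, x.1 i ≠ 0) (a b : Fin p) :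
    HasFDerivAt
      (fun y : Dom pa =>
        (mkL pa y.2 * Matrix.diagonal (fun i => (y.1 i)⁻¹) * (mkL pa y.2)ᵀ) a b)
      (dEntry pa x a b) x := by
  have hrw : (fun y : Dom pa =>
      (mkL pa y.2 * Matrix.diagonal (fun i => (y.1 i)⁻¹) * (mkL pa y.2)ᵀ) a b)
      = fun y : Dom pa => ∑ k, mkL pa y.2 a k * (y.1 k)⁻¹ * mkL pa y.2 b k :=
    funext fun y => entry_eq _ _ a b
  rw [hrw, dEntry]
  refine HasFDerivAt.fun_sum fun k _ => ?_
  have h1 := hasFDerivAt_mkL pa a k x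
  have h2 := hasFDerivAt_invk pa k x (hx k)
  have h3 := hasFDerivAt_mkL pa b k x
  have H := (h1.mul h2).mul h3
  refine H.congr_fderiv ?_
  refine ContinuousLinearMap.ext fun z => ?_
  simp only [ContinuousLinearMap.add_apply, ContinuousLinearMap.coe_smul',
    Pi.smul_apply, smul_eq_mul, ContinuousLinearMap.neg_apply, Pi.mul_apply]
  ring

def psiDeriv (x : Dom pa) : Dom pa →L[ℝ] ((Fin p ⊕ Edges pa) → ℝ) :=
  ContinuousLinearMap.pi fun e => dEntry pa x (rIdx pa e) (cIdx pa e)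

lemma hasFDerivAt_psi (x : Dom pa) (hx : ∀ i, x.1 i ≠ 0) :
    HasFDerivAt (psiMap pa) (psiDeriv pa x) x := by
  have : psiMap pa = fun x e =>
      (mkL pa x.2 * Matrix.diagonal (fun i => (x.1 i)⁻¹) * (mkL pa x.2)ᵀ)
        (rIdx pa e) (cIdx pa e) :=
    funext fun x => funext fun e => psiMap_eq pa x e
  rw [this, psiDeriv]
  exact hasFDerivAt_pi.mpr fun e => hasFDerivAt_entry pa x hx _ _


def Jmat (x : Dom pa) : Matrix (Fin p ⊕ Edges pa) (Fin p ⊕ Edges pa) ℝ :=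
  fun e f =>
    match f with
    | .inl m => -(mkL pa x.2 (rIdx pa e) m * mkL pa x.2 (cIdx pa e) m * (x.1 m ^ 2)⁻¹)
    | .inr g =>
        (if rIdx pa e = g.2.1 then (x.1 g.1)⁻¹ * mkL pa x.2 (cIdx pa e) g.1 else 0)
          + (if cIdx pa e = g.2.1 then (x.1 g.1)⁻¹ * mkL pa x.2 (rIdx pa e) g.1 else 0)

lemma dEntry_single_inl (x : Dom pa) (a b m : Fin p) :
    dEntry pa x a b
        ((LinearEquiv.sumArrowLequivProdArrow (Fin p) (Edges pa) ℝ ℝ)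
          (fun j' => if j' = Sum.inl m then 1 else 0)) =
      -(mkL pa x.2 a m * mkL pa x.2 b m * (x.1 m ^ 2)⁻¹) := by
  set z := (LinearEquiv.sumArrowLequivProdArrow (Fin p) (Edges pa) ℝ ℝ)
      (fun j' => if j' = Sum.inl m then 1 else 0) with hz
  have hz1 : ∀ i, z.1 i = if i = m then 1 else 0 := by
    intro i
    rw [hz, LinearEquiv.sumArrowLequivProdArrow_apply_fst]
    simp
  have hz2 : ∀ g : Edges pa, z.2 g = 0 := by
    intro g
    rw [hz, LinearEquiv.sumArrowLequivProdArrow_apply_snd]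
    simp
  have hdl : ∀ a' k, dl pa a' k z = 0 := by
    intro a' k
    rw [dl_apply]
    split_ifs <;> simp [hz2]
  rw [dEntry]
  simp only [ContinuousLinearMap.coe_sum', Finset.sum_apply,
    ContinuousLinearMap.add_apply, ContinuousLinearMap.coe_smul', Pi.smul_apply,
    smul_eq_mul, hdl, dInv_apply, hz1, mul_zero, zero_add, add_zero]
  simp [Finset.sum_ite_eq', mul_ite]

lemma dEntry_single_inr (hpa : ∀ i : Fin p, ∀ j ∈ pa i, i < j) (x : Dom pa)
    (a b : Fin p) (g : Edges pa) :
    dEntry pa x a b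
        ((LinearEquiv.sumArrowLequivProdArrow (Fin p) (Edges pa) ℝ ℝ)
          (fun j' => if j' = Sum.inr g then 1 else 0)) =
      (if a = g.2.1 then (x.1 g.1)⁻¹ * mkL pa x.2 b g.1 else 0)
        + (if b = g.2.1 then (x.1 g.1)⁻¹ * mkL pa x.2 a g.1 else 0) := by
  obtain ⟨m, j'⟩ := g
  set z := (LinearEquiv.sumArrowLequivProdArrow (Fin p) (Edges pa) ℝ ℝ)
      (fun f' => if f' = Sum.inr (⟨m, j'⟩ : Edges pa) then 1 else 0) with hz
  have hz1 : ∀ i, z.1 i = 0 := by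
    intro i
    rw [hz, LinearEquiv.sumArrowLequivProdArrow_apply_fst]
    simp
  have hz2 : ∀ h : Edges pa, z.2 h = if h = ⟨m, j'⟩ then 1 else 0 := by
    intro h
    rw [hz, LinearEquiv.sumArrowLequivProdArrow_apply_snd]
    simp
  have hdl : ∀ a' k, dl pa a' k z =
      if k = m ∧ a' = j'.1 then 1 else 0 := by
    intro a' k
    rw [dl_apply]
    by_cases hka : k = m ∧ a' = j'.1
    · obtain ⟨hk, ha⟩ := hka
      subst hk
      have hmem : a' ∈ pa k := ha ▸ j'.2
      have hne : a' ≠ k := ha ▸ Fin.ne_of_gt (hpa k j'.1 j'.2)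
      rw [if_neg hne, dif_pos hmem, hz2]
      have he : (⟨k, a', hmem⟩ : Edges pa) = ⟨k, j'⟩ :=
        Sigma.eq rfl (Subtype.ext ha)
      simp [he, ha]
    · rw [if_neg hka]
      by_cases h1 : a' = k
      · rw [if_pos h1]
      · rw [if_neg h1]
        by_cases h2 : a' ∈ pa k
        · rw [dif_pos h2, hz2, if_neg]
          intro hc
          have hk := (Sigma.mk.inj_iff.mp hc).1
          subst hk
          have ha : a' = j'.1 := by
            have := (Sigma.mk.inj_iff.mp hc).2
            simpa [Subtype.ext_iff] using this
          exact hka ⟨rfl, ha⟩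
        · rw [dif_neg h2]
  rw [dEntry]
  simp only [ContinuousLinearMap.coe_sum', Finset.sum_apply,
    ContinuousLinearMap.add_apply, ContinuousLinearMap.coe_smul', Pi.smul_apply,
    smul_eq_mul, hdl, dInv_apply, hz1, mul_zero, add_zero]
  rw [Finset.sum_eq_single m]
  · by_cases ha : a = j'.1 <;> by_cases hb : b = j'.1 <;> simp [ha, hb]
  · intro k _ hk
    simp [hk]
  · simp

lemma toMatrix'_eq (hpa : ∀ i : Fin p, ∀ j ∈ pa i, i < j) (x : Dom pa) :
    LinearMap.toMatrix'
        ((psiDeriv pa x).toLinearMap ∘ₗ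
          (LinearEquiv.sumArrowLequivProdArrow (Fin p) (Edges pa) ℝ ℝ).toLinearMap) =
      Jmat pa x := by
  ext e f
  rw [LinearMap.toMatrix'_apply]
  simp only [LinearMap.coe_comp, Function.comp_apply, LinearEquiv.coe_coe,
    ContinuousLinearMap.coe_coe]
  have : (psiDeriv pa x)
      ((LinearEquiv.sumArrowLequivProdArrow (Fin p) (Edges pa) ℝ ℝ)
        (fun j' => if j' = f then 1 else 0)) e =
      dEntry pa x (rIdx pa e) (cIdx pa e)
        ((LinearEquiv.sumArrowLequivProdArrow (Fin p) (Edges pa) ℝ ℝ)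
          (fun j' => if j' = f then 1 else 0)) := rfl
  rw [show (Pi.single f (1:ℝ)) = (fun j' => if j' = f then (1:ℝ) else 0) from
    funext fun j' => Pi.single_apply f 1 j', this]
  rcases f with m | g
  · rw [dEntry_single_inl]
    rfl
  · rw [dEntry_single_inr pa hpa]
    rfl


def wt : Fin p ⊕ Edges pa → Lex (Fin p × Fin 2) :=
  fun e =>
    match e with
    | .inl i => toLex (i, 0)
    | .inr g => toLex (g.1, 1)

lemma mkL_eq_zero (x : Dom pa) (hpa : ∀ i : Fin p, ∀ j ∈ pa i, i < j) {c m : Fin p}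
    (h : c < m) : mkL pa x.2 c m = 0 := by
  have h1 : c ≠ m := Fin.ne_of_lt h
  have h2 : c ∉ pa m := fun hc => absurd (hpa m c hc) (not_lt_of_gt h)
  simp [mkL, h1, h2]

lemma blockTri (hpa : ∀ i : Fin p, ∀ j ∈ pa i, i < j) (x : Dom pa) :
    ((Jmat pa x)ᵀ).BlockTriangular (wt pa) := by
  intro f e h
  rw [Matrix.transpose_apply]
  have key : ∀ m : Fin p, cIdx pa e < m → ∀ g : {j // j ∈ pa m},
      Jmat pa x e (Sum.inr ⟨m, g⟩) = 0 := by
    intro m hm g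
    have h1 : mkL pa x.2 (cIdx pa e) m = 0 := mkL_eq_zero pa x hpa hm
    have h2 : cIdx pa e ≠ g.1 := Fin.ne_of_lt (hm.trans (hpa m g.1 g.2))
    show (if rIdx pa e = g.1 then (x.1 m)⁻¹ * mkL pa x.2 (cIdx pa e) m else 0)
        + (if cIdx pa e = g.1 then (x.1 m)⁻¹ * mkL pa x.2 (rIdx pa e) m else 0) = 0
    rw [if_neg h2, h1]
    split_ifs <;> simp
  rcases f with m | g
  · -- wt e < toLex (m, 0) : first coordinate strictly less
    have hm : cIdx pa e < m := by
      rcases e with i | g' <;>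
        · rcases Prod.Lex.lt_iff.mp h with h' | ⟨h1, h2⟩
          · exact h'
          · exact absurd h2 (by simp [wt])
    have h1 : mkL pa x.2 (cIdx pa e) m = 0 := mkL_eq_zero pa x hpa hm
    show -(mkL pa x.2 (rIdx pa e) m * mkL pa x.2 (cIdx pa e) m * (x.1 m ^ 2)⁻¹) = 0
    rw [h1]; ring
  · obtain ⟨m, j'⟩ := g
    rcases e with i | g'
    · -- wt (inl i) = toLex (i,0) < toLex (m,1) : i < m or i = m
      rcases Prod.Lex.lt_iff.mp h with h' | ⟨h1, _⟩
      · exact key m h' j'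
      · -- i = m : loop row
        have h1 : (i : Fin p) = m := h1
        subst h1
        have hr : (i : Fin p) ≠ j'.1 := Fin.ne_of_lt (hpa i j'.1 j'.2)
        show (if i = j'.1 then (x.1 i)⁻¹ * mkL pa x.2 i i else 0)
            + (if i = j'.1 then (x.1 i)⁻¹ * mkL pa x.2 i i else 0) = 0
        rw [if_neg hr]; ring
    · -- e = inr g' : toLex (g'.1, 1) < toLex (m, 1) : g'.1 < m
      rcases Prod.Lex.lt_iff.mp h with h' | ⟨h1, h2⟩
      · exact key m h' j'
      · exact absurd h2 (by simp [wt])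


lemma toSquareBlock_apply {α : Type*} (M : Matrix (Fin p ⊕ Edges pa) (Fin p ⊕ Edges pa) ℝ)
    (b : Fin p ⊕ Edges pa → α) (k : α) (i j : {e // b e = k}) :
    M.toSquareBlock b k i j = M i.1 j.1 := rfl

lemma Jmat_inr_inr (x : Dom pa) (m : Fin p) (jf je : {j // j ∈ pa m}) :
    Jmat pa x (Sum.inr ⟨m, jf⟩) (Sum.inr ⟨m, je⟩)
      = (if jf.1 = je.1 then (x.1 m)⁻¹ * mkL pa x.2 m m else 0)
        + (if m = je.1 then (x.1 m)⁻¹ * mkL pa x.2 jf.1 m else 0) := rfl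

lemma block0_det (x : Dom pa) (m : Fin p) :
    (((Jmat pa x)ᵀ).toSquareBlock (wt pa) (toLex (m, (0 : Fin 2)))).det =
      -(x.1 m ^ 2)⁻¹ := by
  letI : Unique {e // wt pa e = toLex (m, (0 : Fin 2))} :=
    { default := ⟨Sum.inl m, rfl⟩
      uniq := by
        rintro ⟨e, he⟩
        apply Subtype.ext
        rcases e with i | g
        · have h1 : i = m := congrArg (fun z => (ofLex z).1) he
          exact congrArg Sum.inl h1
        · have h2 : (1 : Fin 2) = 0 := congrArg (fun z => (ofLex z).2) he
          exact absurd h2 (by decide) }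
  rw [Matrix.det_unique, toSquareBlock_apply]
  have h1 : ((Jmat pa x)ᵀ)
      (default : {e // wt pa e = toLex (m, (0 : Fin 2))}).1
      (default : {e // wt pa e = toLex (m, (0 : Fin 2))}).1
      = -(mkL pa x.2 m m * mkL pa x.2 m m * (x.1 m ^ 2)⁻¹) := rfl
  rw [h1]
  simp [mkL]

lemma block1_eq (hpa : ∀ i : Fin p, ∀ j ∈ pa i, i < j) (x : Dom pa) (m : Fin p) :
    ((Jmat pa x)ᵀ).toSquareBlock (wt pa) (toLex (m, (1 : Fin 2))) =
      (x.1 m)⁻¹ • (1 : Matrix {e // wt pa e = toLex (m, (1 : Fin 2))}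
        {e // wt pa e = toLex (m, (1 : Fin 2))} ℝ) := by
  ext e f
  obtain ⟨e, he⟩ := e
  obtain ⟨f, hf⟩ := f
  rcases e with i | ⟨i, je⟩
  · have h2 : (0 : Fin 2) = 1 := congrArg (fun z => (ofLex z).2) he
    exact absurd h2 (by decide)
  rcases f with i' | ⟨i', jf⟩
  · have h2 : (0 : Fin 2) = 1 := congrArg (fun z => (ofLex z).2) hf
    exact absurd h2 (by decide)
  have hi : i = m := congrArg (fun z => (ofLex z).1) he
  have hi' : i' = m := congrArg (fun z => (ofLex z).1) hf
  subst hi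
  subst hi'
  rw [toSquareBlock_apply, Matrix.transpose_apply, Jmat_inr_inr,
    Matrix.smul_apply, Matrix.one_apply]
  rw [if_neg (Fin.ne_of_lt (hpa _ je.1 je.2)), add_zero]
  by_cases h : jf.1 = je.1
  · have hsig : (⟨_, je⟩ : Edges pa) = ⟨_, jf⟩ :=
      Sigma.mk.inj_iff.mpr ⟨rfl, heq_of_eq (Subtype.ext h.symm)⟩
    rw [if_pos h, if_pos (Subtype.ext (congrArg Sum.inr hsig)),
      smul_eq_mul, mul_one]
    simp [mkL]
  · rw [if_neg h, if_neg, smul_zero]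
    intro hc
    apply h
    have h2 := Sum.inr_injective (congrArg Subtype.val hc)
    have h3 := (Sigma.mk.inj_iff.mp h2).2
    symm
    exact congrArg Subtype.val (eq_of_heq h3)

lemma card_block1 (m : Fin p) :
    Fintype.card {e // wt pa e = toLex (m, (1 : Fin 2))} = (pa m).card := by
  have eqv : {j // j ∈ pa m} ≃ {e // wt pa e = toLex (m, (1 : Fin 2))} := by
    refine Equiv.ofBijective (fun j => ⟨Sum.inr ⟨m, j⟩, rfl⟩) ⟨?_, ?_⟩
    · intro j j' hjj
      have h1 : (Sum.inr ⟨m, j⟩ : Fin p ⊕ Edges pa) = Sum.inr ⟨m, j'⟩ :=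
        congrArg Subtype.val hjj
      have h2 : (⟨m, j⟩ : Edges pa) = ⟨m, j'⟩ := Sum.inr_injective h1
      have h3 := (Sigma.mk.inj_iff.mp h2).2
      simpa using h3
    · rintro ⟨e, he⟩
      rcases e with i | ⟨i, je⟩
      · have h2 : (0 : Fin 2) = 1 := congrArg (fun z => (ofLex z).2) he
        exact absurd h2 (by decide)
      · have hi : i = m := congrArg (fun z => (ofLex z).1) he
        subst hi
        exact ⟨je, Subtype.ext rfl⟩
  rw [← Fintype.card_congr eqv, Fintype.card_coe]

lemma block1_det (hpa : ∀ i : Fin p, ∀ j ∈ pa i, i < j) (x : Dom pa) (m : Fin p) :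
    (((Jmat pa x)ᵀ).toSquareBlock (wt pa) (toLex (m, (1 : Fin 2)))).det =
      ((x.1 m)⁻¹) ^ (pa m).card := by
  rw [block1_eq pa hpa x m, Matrix.det_smul, Matrix.det_one, mul_one, card_block1]

lemma det_Jmat (hpa : ∀ i : Fin p, ∀ j ∈ pa i, i < j) (x : Dom pa) :
    (Jmat pa x).det =
      ∏ m : Fin p, (-(x.1 m ^ 2)⁻¹ * ((x.1 m)⁻¹) ^ (pa m).card) := by
  rw [← Matrix.det_transpose, (blockTri pa hpa x).det_fintype]
  rw [← Fintype.prod_equiv (toLex : Fin p × Fin 2 ≃ Lex (Fin p × Fin 2))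
    (fun z => (((Jmat pa x)ᵀ).toSquareBlock (wt pa) (toLex z)).det)
    (fun k => (((Jmat pa x)ᵀ).toSquareBlock (wt pa) k).det) (fun _ => rfl)]
  rw [Fintype.prod_prod_type]
  refine Finset.prod_congr rfl fun m _ => ?_
  rw [Fin.prod_univ_two, block0_det, block1_det pa hpa]


lemma contDiffAt_mkL (a k : Fin p) (x : Dom pa) :
    ContDiffAt ℝ 1 (fun y : Dom pa => mkL pa y.2 a k) x := by
  unfold mkL
  by_cases h1 : a = k
  · simp only [Matrix.of_apply, if_pos h1]
    exact contDiffAt_const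
  · simp only [Matrix.of_apply, if_neg h1]
    by_cases h2 : a ∈ pa k
    · simp only [dif_pos h2]
      exact (((ContinuousLinearMap.proj (⟨k, a, h2⟩ : Edges pa)).comp
        (ContinuousLinearMap.snd ℝ (Fin p → ℝ) (Edges pa → ℝ))).contDiff).contDiffAt
    · simp only [dif_neg h2]
      exact contDiffAt_const

lemma contDiffOn_psi : ContDiffOn ℝ 1 (psiMap pa) (thetaSet pa) := by
  intro x hx
  have hx' : ∀ i, x.1 i ≠ 0 := fun i => ne_of_gt (hx i)
  suffices h : ContDiffAt ℝ 1 (psiMap pa) x from h.contDiffWithinAt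
  rw [contDiffAt_pi]
  intro e
  have hfun : (fun y : Dom pa => psiMap pa y e)
      = fun y : Dom pa => ∑ k, mkL pa y.2 (rIdx pa e) k * (y.1 k)⁻¹
          * mkL pa y.2 (cIdx pa e) k := by
    funext y
    rw [psiMap_eq, entry_eq]
  rw [hfun]
  refine ContDiffAt.sum fun k _ => ?_
  have hinv : ContDiffAt ℝ 1 (fun y : Dom pa => (y.1 k)⁻¹) x := by
    refine ContDiffAt.inv ?_ (hx' k)
    exact (((ContinuousLinearMap.proj k).comp
      (ContinuousLinearMap.fst ℝ (Fin p → ℝ) (Edges pa → ℝ))).contDiff).contDiffAt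
  exact ((contDiffAt_mkL pa _ k x).mul hinv).mul (contDiffAt_mkL pa _ k x)

end Stmt8Aux

/-- `ψ` is C¹ on `Θ_𝒟` and the absolute Jacobian determinant of `ψ`
(with the coordinate `D_{ii}` matched to the loop `(i,i)` and `L_{ji}` to the edge `(j,i)`)
equals `∏_j D_{jj}^{-(pa_j + 2)}`. -/
theorem stmt8 {p : ℕ} (hp : 1 ≤ p) (pa : Fin p → Finset (Fin p))
    (hpa : ∀ i : Fin p, ∀ j ∈ pa i, i < j) :
    ContDiffOn ℝ 1 (psiMap pa) (thetaSet pa) ∧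
    ∀ x ∈ thetaSet pa,
      |LinearMap.det ((fderiv ℝ (psiMap pa) x).toLinearMap ∘ₗ
          (LinearEquiv.sumArrowLequivProdArrow (Fin p) (Edges pa) ℝ ℝ).toLinearMap)| =
        ∏ j : Fin p, x.1 j ^ (-(((pa j).card : ℝ) + 2)) := by
  refine ⟨Stmt8Aux.contDiffOn_psi pa, fun x hx => ?_⟩
  have hx' : ∀ i, x.1 i ≠ 0 := fun i => ne_of_gt (hx i)
  rw [(Stmt8Aux.hasFDerivAt_psi pa x hx').fderiv]
  rw [← LinearMap.det_toMatrix' ((Stmt8Aux.psiDeriv pa x).toLinearMap ∘ₗ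
    (LinearEquiv.sumArrowLequivProdArrow (Fin p) (Edges pa) ℝ ℝ).toLinearMap)]
  rw [Stmt8Aux.toMatrix'_eq pa hpa x, Stmt8Aux.det_Jmat pa hpa x]
  rw [Finset.abs_prod]
  refine Finset.prod_congr rfl fun m _ => ?_
  have hm := hx m
  have h1 : (-(((pa m).card : ℝ) + 2)) = -((((pa m).card + 2 : ℕ)) : ℝ) := by
    push_cast; ring
  rw [h1, Real.rpow_neg hm.le, Real.rpow_natCast]
  rw [abs_mul, abs_neg, abs_inv, abs_pow, abs_pow, abs_inv, abs_of_pos hm]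
  rw [inv_pow, ← mul_inv, pow_add]
  ring


end
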